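/- Let S be a finite semigroup that is a left regular band of groups, with idempotent-power map ω, and let x, y ∈ S be idempotents. Then left multiplication by y induces a group morphism λ_{y,x} : G_x → G_{y·x}, s ↦ y·s; concretely: (i) if ω s = x then ω(y·s) = y·x; (ii) if ω s = x and ω t = x then (y·s)·(y·t) = y·(s·t). Moreover, if x' is an idempotent with x ∼ x', then λ_{x,x'} and λ_{x',x} are mutually inverse isomorphisms: for every s with ω s = x one has x·(x'·s) = s, and for every s' with ω s' = x' one has x'·(x·s') = s'. -/
import Mathlib


/-- The support relation `s ∼ t` on a left regular band of groups:
`(ω s)·t = s` and `(ω t)·s = t`. -/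
def LRBGsim {S : Type*} [Mul S] (ω : S → S) (s t : S) : Prop :=
  ω s * t = s ∧ ω t * s = t

/-- In a finite LRBG, for idempotents `x, y`, left multiplication by `y`
induces a group morphism `λ_{y,x} : G_x → G_{y·x}`; and if `x ∼ x'` are idempotents,
then `λ_{x,x'}` and `λ_{x',x}` are mutually inverse isomorphisms. -/
theorem lrbg_left_multiplication_group_morphism {S : Type*} [Semigroup S] [Fintype S]
    (ω : S → S)
    (hidem : ∀ s : S, ω s * ω s = ω s)
    (hpow : ∀ s : S, ∃ n : ℕ, ω s = (fun t => t * s)^[n] s)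
    (lrbg1 : ∀ s : S, ω s * s = s)
    (lrbg2 : ∀ s t : S, s * t * ω s = s * t) :
    ∀ x y : S, x * x = x → y * y = y →
      (∀ s : S, ω s = x → ω (y * s) = y * x) ∧
      (∀ s t : S, ω s = x → ω t = x → (y * s) * (y * t) = y * (s * t)) ∧
      (∀ x' : S, x' * x' = x' → LRBGsim ω x x' →
        (∀ s : S, ω s = x → x * (x' * s) = s) ∧
        (∀ s' : S, ω s' = x' → x' * (x * s') = s')) := by
  have pdef : ∀ (s : S) (k : ℕ),
      (fun t => t * s)^[k + 1] s = (fun t => t * s)^[k] s * s := by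
    intro s k
    rw [Function.iterate_succ_apply']
  have ppow : ∀ (s : S) (a b : ℕ),
      (fun t => t * s)^[a] s * (fun t => t * s)^[b] s = (fun t => t * s)^[a + b + 1] s := by
    intro s a b
    induction b with
    | zero => simpa using (pdef s a).symm
    | succ b ih =>
      rw [pdef, ← mul_assoc, ih]
      have h : a + (b + 1) + 1 = (a + b + 1) + 1 := by omega
      rw [h]
      exact (pdef s (a + b + 1)).symm
  have prep : ∀ (s : S) (a : ℕ),
      (fun t => t * s)^[a] s * (fun t => t * s)^[a] s = (fun t => t * s)^[a] s →
      ∀ b : ℕ, (fun t => t * s)^[a + b * (a + 1)] s = (fun t => t * s)^[a] s := by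
    intro s a ha b
    induction b with
    | zero => simp
    | succ b ih =>
      have h1 : a + (b + 1) * (a + 1) = (a + b * (a + 1)) + a + 1 := by ring
      rw [h1, ← ppow, ih, ha]
  have puniq : ∀ (s : S) (a b : ℕ),
      (fun t => t * s)^[a] s * (fun t => t * s)^[a] s = (fun t => t * s)^[a] s →
      (fun t => t * s)^[b] s * (fun t => t * s)^[b] s = (fun t => t * s)^[b] s →
      (fun t => t * s)^[a] s = (fun t => t * s)^[b] s := by
    intro s a b ha hb
    have h1 := prep s a ha b
    have h2 := prep s b hb a
    have h3 : a + b * (a + 1) = b + a * (b + 1) := by ring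
    rw [← h1, h3, h2]
  have pid : ∀ e : S, e * e = e → ∀ k, (fun t => t * e)^[k] e = e := by
    intro e he k
    induction k with
    | zero => simp
    | succ k ih => rw [pdef, ih, he]
  have ωid : ∀ e : S, e * e = e → ω e = e := by
    intro e he
    obtain ⟨n, hn⟩ := hpow e
    rw [hn, pid e he]
  intro x y hx hy
  have hωx := ωid x hx
  have hωy := ωid y hy
  have key : ∀ t : S, y * t * y = y * t := by
    intro t
    have h := lrbg2 y t
    rwa [hωy] at h
  have mor : ∀ s t : S, (y * s) * (y * t) = y * (s * t) := by
    intro s t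
    calc (y * s) * (y * t) = ((y * s) * y) * t := (mul_assoc _ _ _).symm
    _ = (y * s) * t := by rw [key]
    _ = y * (s * t) := by rw [mul_assoc]
  have hyx : (y * x) * (y * x) = y * x := by rw [mor, hx]
  refine ⟨?_, fun s t _ _ => mor s t, ?_⟩
  · intro s hs
    have hys : ∀ k : ℕ,
        (fun t => t * (y * s))^[k] (y * s) = y * (fun t => t * s)^[k] s := by
      intro k
      induction k with
      | zero => simp
      | succ k ih =>
        rw [pdef, pdef, ih, ← mul_assoc, ← mul_assoc, key]
    obtain ⟨m, hm⟩ := hpow (y * s)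
    obtain ⟨n, hn⟩ := hpow s
    have hb : y * x = (fun t => t * (y * s))^[n] (y * s) := by
      rw [hys n, ← hn, hs]
    have heq := puniq (y * s) m n
      (by rw [← hm]; exact hidem _) (by rw [← hb]; exact hyx)
    rw [hm, heq, ← hb]
  · intro x' hx' hsim
    obtain ⟨h1, h2⟩ := hsim
    rw [hωx] at h1
    rw [ωid x' hx'] at h2
    constructor
    · intro s hs
      rw [← mul_assoc, h1, ← hs, lrbg1]
    · intro s' hs'
      rw [← mul_assoc, h2, ← hs', lrbg1]
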